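/- Define E(ζ,η) = 9ζ² − 4ζη + 4η² and, for (ζ,η) ≠ (0,0), the complex-valued symbols A^a(ζ,η) = 3iζ(ζ² − (1/2)ζη + η²)/E(ζ,η), B^a(ζ,η) = −iζ((9/2)ζ² + (1/2)ζη + η²)/E(ζ,η), C^a(ζ,η) = −3iζ²/E(ζ,η), D^a(ζ,η) = −iζ((9/2)ζ² − 4ζη + 4η²)/E(ζ,η). Then for all (ζ,η) ≠ (0,0): (1) iη·B^a + iζ²·C^a + i(ζ−η)·A^a = ζη; (2) −iζ·B^a − iη²·C^a + i(ζ−η)·D^a = −ζη; (3) −iζ·A^a + iη·D^a − i(ζ−η)²·C^a = ζη; (4) −iη²·A^a + iζ²·D^a − i(ζ−η)²·B^a = (1/2)ζη(ζ+η), where all symbols are evaluated at (ζ,η). -/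

import Mathlib

open Complex

/-- The symbol equations defining the mixed (holomorphic–antiholomorphic) part of the
quadratic normal form transformation for capillary water waves: with
`E(ζ,η) = 9ζ² − 4ζη + 4η²` and the symbols `A^a`, `B^a`, `C^a`, `D^a` as in the paper,
the four symbol identities hold away from the origin. -/
theorem capillary_mixed_normal_form_symbols
    (Aa Ba Ca Da : ℝ → ℝ → ℂ)
    (hAa : ∀ ζ η : ℝ, (ζ, η) ≠ (0, 0) →
      Aa ζ η = 3 * Complex.I * (ζ:ℂ) * ((ζ:ℂ)^2 - (1/2) * (ζ:ℂ) * (η:ℂ) + (η:ℂ)^2)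
        / (9 * (ζ:ℂ)^2 - 4 * (ζ:ℂ) * (η:ℂ) + 4 * (η:ℂ)^2))
    (hBa : ∀ ζ η : ℝ, (ζ, η) ≠ (0, 0) →
      Ba ζ η = -Complex.I * (ζ:ℂ) * ((9/2) * (ζ:ℂ)^2 + (1/2) * (ζ:ℂ) * (η:ℂ) + (η:ℂ)^2)
        / (9 * (ζ:ℂ)^2 - 4 * (ζ:ℂ) * (η:ℂ) + 4 * (η:ℂ)^2))
    (hCa : ∀ ζ η : ℝ, (ζ, η) ≠ (0, 0) →
      Ca ζ η = -3 * Complex.I * (ζ:ℂ)^2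
        / (9 * (ζ:ℂ)^2 - 4 * (ζ:ℂ) * (η:ℂ) + 4 * (η:ℂ)^2))
    (hDa : ∀ ζ η : ℝ, (ζ, η) ≠ (0, 0) →
      Da ζ η = -Complex.I * (ζ:ℂ) * ((9/2) * (ζ:ℂ)^2 - 4 * (ζ:ℂ) * (η:ℂ) + 4 * (η:ℂ)^2)
        / (9 * (ζ:ℂ)^2 - 4 * (ζ:ℂ) * (η:ℂ) + 4 * (η:ℂ)^2)) :
    ∀ ζ η : ℝ, (ζ, η) ≠ (0, 0) →
      (Complex.I * (η:ℂ) * Ba ζ η + Complex.I * (ζ:ℂ)^2 * Ca ζ η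
        + Complex.I * ((ζ:ℂ) - (η:ℂ)) * Aa ζ η = (ζ:ℂ) * (η:ℂ)) ∧
      (-(Complex.I * (ζ:ℂ) * Ba ζ η) - Complex.I * (η:ℂ)^2 * Ca ζ η
        + Complex.I * ((ζ:ℂ) - (η:ℂ)) * Da ζ η = -((ζ:ℂ) * (η:ℂ))) ∧
      (-(Complex.I * (ζ:ℂ) * Aa ζ η) + Complex.I * (η:ℂ) * Da ζ η
        - Complex.I * ((ζ:ℂ) - (η:ℂ))^2 * Ca ζ η = (ζ:ℂ) * (η:ℂ)) ∧
      (-(Complex.I * (η:ℂ)^2 * Aa ζ η) + Complex.I * (ζ:ℂ)^2 * Da ζ η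
        - Complex.I * ((ζ:ℂ) - (η:ℂ))^2 * Ba ζ η
        = (1/2) * (ζ:ℂ) * (η:ℂ) * ((ζ:ℂ) + (η:ℂ))) := by
  intro ζ η h
  have hr : (9*ζ^2 - 4*ζ*η + 4*η^2 : ℝ) ≠ 0 := by
    have h' : ζ ≠ 0 ∨ η ≠ 0 := by
      by_contra hc
      push_neg at hc
      exact h (by simp [hc.1, hc.2])
    rcases h' with h' | h' <;>
      nlinarith [sq_nonneg (2*ζ - η), mul_self_pos.mpr h', sq_nonneg ζ, sq_nonneg η]
  have hE : (9 * (ζ:ℂ)^2 - 4 * (ζ:ℂ) * (η:ℂ) + 4 * (η:ℂ)^2) ≠ 0 := by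
    intro hc
    apply hr
    exact_mod_cast hc
  have hE' : ((ζ:ℂ) * ((ζ:ℂ) * 9 - (η:ℂ) * 4) + (η:ℂ) ^ 2 * 4) ≠ 0 := by
    convert hE using 1; ring
  rw [hAa ζ η h, hBa ζ η h, hCa ζ η h, hDa ζ η h]
  refine ⟨?_, ?_, ?_, ?_⟩ <;> field_simp <;> ring_nf <;> simp [Complex.I_sq] <;> ring
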